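/- Augmented-graph identity for forests with vertex weights: Σ_{F forest of G} ∏_{ij∈F} β_{ij} ∏_{T∈F}(1+Σ_{i∈T} h_i) equals Σ_{F' forest of G̃} ∏_{ij∈F'} β̃_{ij}, where G̃ is G with one extra vertex δ joined to each i∈V(G) with weight β̃_{iδ} = h_i and β̃_{ij}=β_{ij} on G. -/

import Mathlib

open scoped Classical

/-- `F` is a forest: edges are recorded as ordered pairs with `p.1 < p.2` and the
induced simple graph is acyclic. -/
def ForestRep {n : ℕ} (F : Finset (Fin n × Fin n)) : Prop :=
  (∀ p ∈ F, p.1 < p.2) ∧ (SimpleGraph.fromRel (fun i j => (i, j) ∈ F)).IsAcyclic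

/-- Weight `∏_{ij ∈ F} β i j` of a forest. -/
def fwt {n : ℕ} (β : Fin n → Fin n → ℝ) (F : Finset (Fin n × Fin n)) : ℝ :=
  ∏ p ∈ F, β p.1 p.2

/-- `∏_{T tree of F} (1 + ∑_{i ∈ T} g i)`, product over connected components. -/
noncomputable def treeFactor {n : ℕ} (F : Finset (Fin n × Fin n)) (g : Fin n → ℝ) : ℝ :=
  ∏ c ∈ Finset.univ.image (SimpleGraph.fromRel (fun i j => (i, j) ∈ F)).connectedComponentMk,
    (1 + ∑ i ∈ Finset.univ.filter
        (fun i => (SimpleGraph.fromRel (fun i j => (i, j) ∈ F)).connectedComponentMk i = c), g i)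

/-- Edge weights on the augmented graph `G̃`: the extra vertex `δ = Fin.last n` is
joined to each `i` with weight `h i`; all other weights are those of `β`. -/
def βaug {n : ℕ} (β : Fin n → Fin n → ℝ) (h : Fin n → ℝ) :
    Fin (n + 1) → Fin (n + 1) → ℝ := fun i j =>
  if hi : i = Fin.last n then
    (if hj : j = Fin.last n then 0 else h (j.castPred hj))
  else if hj : j = Fin.last n then h (i.castPred hi)
  else β (i.castPred hi) (j.castPred hj)

section part1
open Finset

-- sum over subsets of s with at most one element
lemma sum_card_le_one {α : Type*} (s : Finset α) (g : α → ℝ) :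
    ∑ r ∈ s.powerset, (if r.card ≤ 1 then ∏ i ∈ r, g i else 0) = 1 + ∑ i ∈ s, g i := by
  classical
  induction s using Finset.induction with
  | empty => simp
  | @insert a s ha ih =>
    rw [Finset.sum_powerset_insert ha, ih, Finset.sum_insert ha]
    have h2 : ∑ t ∈ s.powerset, (if (insert a t).card ≤ 1 then ∏ i ∈ insert a t, g i else 0)
        = g a := by
      rw [Finset.sum_eq_single (∅ : Finset α)]
      · simp
      · intro b hb hbne
        have : ¬ (insert a b).card ≤ 1 := by
          have hab : a ∉ b := fun h => ha (Finset.mem_powerset.mp hb h)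
          rw [Finset.card_insert_of_notMem hab]
          have : 0 < b.card := Finset.card_pos.mpr (Finset.nonempty_iff_ne_empty.mpr hbne)
          omega
        simp [this]
      · simp
    rw [h2]; ring

lemma injOn_union_card {α γ : Type*} (f : α → γ) (c : γ) (t : Finset γ) (hc : c ∉ t)
    (R₁ R₂ : Finset α) (h1 : ∀ i ∈ R₁, f i = c) (h2 : ∀ i ∈ R₂, f i ∈ t) :
    Set.InjOn f ↑(R₁ ∪ R₂) ↔ (R₁.card ≤ 1 ∧ Set.InjOn f ↑R₂) := by
  constructor
  · intro h
    refine ⟨Finset.card_le_one.mpr fun a ha b hb => ?_, fun a ha b hb hab => ?_⟩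
    · exact h (by simp [ha]) (by simp [hb]) ((h1 a ha).trans (h1 b hb).symm)
    · exact h (by simp [Finset.mem_coe.mp ha]) (by simp [Finset.mem_coe.mp hb]) hab
  · rintro ⟨h1c, h2i⟩ a ha b hb hab
    simp only [Finset.coe_union, Set.mem_union, Finset.mem_coe] at ha hb
    rcases ha with ha | ha <;> rcases hb with hb | hb
    · exact Finset.card_le_one.mp h1c a ha b hb
    · exact absurd (by rw [← h1 a ha, hab]; exact h2 b hb) hc
    · exact absurd (by rw [← h1 b hb, ← hab]; exact h2 a ha) hc
    · exact h2i ha hb hab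

lemma prod_fiber_eq_sum {α γ : Type*} [Fintype α] (f : α → γ) (g : α → ℝ) (t : Finset γ) :
    ∏ c ∈ t, (1 + ∑ i ∈ univ.filter (fun i => f i = c), g i)
      = ∑ R ∈ (univ.filter (fun i => f i ∈ t)).powerset,
          if Set.InjOn f ↑R then ∏ i ∈ R, g i else 0 := by
  classical
  induction t using Finset.induction with
  | empty => simp
  | @insert c t hc ih =>
    rw [Finset.prod_insert hc, ih]
    -- bijection : powerset of fiber(insert) ≃ fiberc.powerset × pre(t).powerset
    set Fc := univ.filter (fun i => f i = c) with hFc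
    set Pt := univ.filter (fun i => f i ∈ t) with hPt
    have hdisj : Disjoint Fc Pt := by
      rw [Finset.disjoint_left]
      intro a haf hat
      simp only [hFc, hPt, Finset.mem_filter] at haf hat
      exact hc (haf.2 ▸ hat.2)
    have hsplit : ∑ R ∈ (univ.filter (fun i => f i ∈ insert c t)).powerset,
          (if Set.InjOn f ↑R then ∏ i ∈ R, g i else 0)
        = ∑ p ∈ Fc.powerset ×ˢ Pt.powerset,
          (if Set.InjOn f ↑(p.1 ∪ p.2) then ∏ i ∈ p.1 ∪ p.2, g i else 0) := by
      refine (Finset.sum_bij' (fun p _ => p.1 ∪ p.2)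
        (fun R _ => (R.filter (fun i => f i = c), R.filter (fun i => f i ∈ t)))
        ?_ ?_ ?_ ?_ ?_).symm
      · intro p hp
        simp only [Finset.mem_product, Finset.mem_powerset] at hp
        rw [Finset.mem_powerset]
        intro x hx
        rcases Finset.mem_union.mp hx with hx | hx
        · have := hp.1 hx; simp only [hFc, Finset.mem_filter] at this
          simp [this.2]
        · have := hp.2 hx; simp only [hPt, Finset.mem_filter] at this
          simp [this.2]
      · intro R hR
        simp only [Finset.mem_powerset] at hR
        simp only [Finset.mem_product, Finset.mem_powerset, hFc, hPt]
        constructor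
        · intro x hx; simp only [Finset.mem_filter] at hx ⊢; exact ⟨Finset.mem_univ _, hx.2⟩
        · intro x hx; simp only [Finset.mem_filter] at hx ⊢; exact ⟨Finset.mem_univ _, hx.2⟩
      · intro p hp
        simp only [Finset.mem_product, Finset.mem_powerset] at hp
        have e1 : (p.1 ∪ p.2).filter (fun i => f i = c) = p.1 := by
          ext x
          simp only [Finset.mem_filter, Finset.mem_union]
          constructor
          · rintro ⟨hx | hx, hfx⟩
            · exact hx
            · exact absurd (hfx ▸ (Finset.mem_filter.mp (hp.2 hx)).2) hc
          · intro hx; exact ⟨Or.inl hx, (Finset.mem_filter.mp (hp.1 hx)).2⟩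
        have e2 : (p.1 ∪ p.2).filter (fun i => f i ∈ t) = p.2 := by
          ext x
          simp only [Finset.mem_filter, Finset.mem_union]
          constructor
          · rintro ⟨hx | hx, hfx⟩
            · exact absurd ((Finset.mem_filter.mp (hp.1 hx)).2 ▸ hfx) hc
            · exact hx
          · intro hx; exact ⟨Or.inr hx, (Finset.mem_filter.mp (hp.2 hx)).2⟩
        exact Prod.ext e1 e2
      · intro R hR
        simp only [Finset.mem_powerset] at hR
        ext x
        simp only [Finset.mem_union, Finset.mem_filter]
        constructor
        · rintro (⟨h, _⟩ | ⟨h, _⟩) <;> exact h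
        · intro hx
          have := Finset.mem_filter.mp (hR hx)
          rcases Finset.mem_insert.mp this.2 with h | h
          · exact Or.inl ⟨hx, h⟩
          · exact Or.inr ⟨hx, h⟩
      · intro R hR; rfl
    rw [hsplit, Finset.sum_product]
    have key : ∀ R₁ ∈ Fc.powerset, ∀ R₂ ∈ Pt.powerset,
        (if Set.InjOn f ↑(R₁ ∪ R₂) then ∏ i ∈ R₁ ∪ R₂, g i else 0)
        = (if R₁.card ≤ 1 then ∏ i ∈ R₁, g i else 0)
          * (if Set.InjOn f ↑R₂ then ∏ i ∈ R₂, g i else 0) := by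
      intro R₁ h₁ R₂ h₂
      rw [Finset.mem_powerset] at h₁ h₂
      have hd : Disjoint R₁ R₂ := hdisj.mono h₁ h₂
      have hiff := injOn_union_card f c t hc R₁ R₂
        (fun i hi => (Finset.mem_filter.mp (h₁ hi)).2)
        (fun i hi => (Finset.mem_filter.mp (h₂ hi)).2)
      rw [Finset.prod_union hd]
      by_cases hA : R₁.card ≤ 1 <;> by_cases hB : Set.InjOn f ↑R₂
      · rw [if_pos (hiff.mpr ⟨hA, hB⟩), if_pos hA, if_pos hB]
      · rw [if_neg (fun hI => hB (hiff.mp hI).2), if_pos hA, if_neg hB, mul_zero]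
      · rw [if_neg (fun hI => hA (hiff.mp hI).1), if_neg hA, zero_mul]
      · rw [if_neg (fun hI => hB (hiff.mp hI).2), if_neg hA, zero_mul]
    rw [Finset.sum_congr rfl (fun R₁ h₁ => Finset.sum_congr rfl (fun R₂ h₂ => key R₁ h₁ R₂ h₂))]
    rw [← Finset.sum_mul_sum]
    rw [sum_card_le_one]

end part1

section part2
open Finset SimpleGraph Fin

variable {n : ℕ}

def augSet (F : Finset (Fin n × Fin n)) (R : Finset (Fin n)) :
    Finset (Fin (n + 1) × Fin (n + 1)) :=
  F.image (fun p => (p.1.castSucc, p.2.castSucc)) ∪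
    R.image (fun r => (r.castSucc, Fin.last n))

section Graph
variable (F : Finset (Fin n × Fin n)) (R : Finset (Fin n))

local notation "G" => SimpleGraph.fromRel (fun i j : Fin n => (i, j) ∈ F)
local notation "G'" => SimpleGraph.fromRel (fun i j : Fin (n+1) => (i, j) ∈ augSet F R)

lemma mem_augSet_castSucc {i j : Fin n} :
    ((i.castSucc, j.castSucc) ∈ augSet F R) ↔ (i, j) ∈ F := by
  constructor
  · intro hmem
    rcases Finset.mem_union.mp hmem with hmem | hmem
    · obtain ⟨p, hp, hpe⟩ := Finset.mem_image.mp hmem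
      rw [Prod.ext_iff] at hpe
      have h1 : p.1 = i := castSucc_inj.mp hpe.1
      have h2 : p.2 = j := castSucc_inj.mp hpe.2
      rwa [← h1, ← h2]
    · obtain ⟨r, hr, hre⟩ := Finset.mem_image.mp hmem
      exact absurd (congrArg Prod.snd hre) (castSucc_lt_last j).ne'
  · intro hij
    exact Finset.mem_union_left _ (Finset.mem_image.mpr ⟨(i, j), hij, rfl⟩)

lemma mem_augSet_last {x : Fin (n+1)} :
    ((x, Fin.last n) ∈ augSet F R) ↔ ∃ r ∈ R, x = r.castSucc := by
  constructor
  · intro hmem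
    rcases Finset.mem_union.mp hmem with hmem | hmem
    · obtain ⟨p, hp, hpe⟩ := Finset.mem_image.mp hmem
      exact absurd (congrArg Prod.snd hpe) (castSucc_lt_last p.2).ne
    · obtain ⟨r, hr, hre⟩ := Finset.mem_image.mp hmem
      exact ⟨r, hr, (congrArg Prod.fst hre).symm⟩
  · rintro ⟨r, hr, rfl⟩
    exact Finset.mem_union_right _ (Finset.mem_image.mpr ⟨r, hr, rfl⟩)

lemma mem_augSet_last_left {x : Fin (n+1)} : ¬ ((Fin.last n, x) ∈ augSet F R) := by
  intro hmem
  rcases Finset.mem_union.mp hmem with hmem | hmem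
  · obtain ⟨p, hp, hpe⟩ := Finset.mem_image.mp hmem
    exact (castSucc_lt_last p.1).ne (congrArg Prod.fst hpe)
  · obtain ⟨r, hr, hre⟩ := Finset.mem_image.mp hmem
    exact (castSucc_lt_last r).ne (congrArg Prod.fst hre)

lemma adj_castSucc {i j : Fin n} :
    (G').Adj i.castSucc j.castSucc ↔ (G).Adj i j := by
  simp only [fromRel_adj, mem_augSet_castSucc, ne_eq, castSucc_inj]

lemma adj_last {x : Fin (n+1)} :
    (G').Adj x (Fin.last n) ↔ ∃ r ∈ R, x = r.castSucc := by
  rw [fromRel_adj]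
  constructor
  · rintro ⟨hne, h | h⟩
    · exact (mem_augSet_last F R).mp h
    · exact absurd h (mem_augSet_last_left F R)
  · rintro ⟨r, hr, rfl⟩
    exact ⟨(castSucc_lt_last r).ne, Or.inl ((mem_augSet_last F R).mpr ⟨r, hr, rfl⟩)⟩

/-- The embedding of `G` into `G'`. -/
def homF : (G) →g (G') where
  toFun := Fin.castSucc
  map_rel' := fun h => (adj_castSucc F R).mpr h

lemma homF_injective : Function.Injective (homF F R : Fin n → Fin (n+1)) :=
  Fin.castSucc_injective n

lemma exists_preimage : ∀ {x y : Fin (n+1)} (p : (G').Walk x y),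
    Fin.last n ∉ p.support →
    ∃ (i j : Fin n) (hx : x = i.castSucc) (hy : y = j.castSucc) (q : (G).Walk i j),
      p = (q.map (homF F R)).copy hx.symm hy.symm := by
  intro x y p
  induction p with
  | @nil u =>
    intro hs
    simp only [SimpleGraph.Walk.support_nil, List.mem_singleton] at hs
    obtain ⟨a, rfl⟩ : ∃ a : Fin n, u = a.castSucc :=
      ⟨u.castPred (fun h => hs h.symm), (castSucc_castPred _ _).symm⟩
    exact ⟨a, a, rfl, rfl, SimpleGraph.Walk.nil, rfl⟩
  | @cons u v w h q ih =>
    intro hs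
    simp only [SimpleGraph.Walk.support_cons, List.mem_cons] at hs
    push_neg at hs
    obtain ⟨i, k, hv, hw, q', rfl⟩ := ih hs.2
    subst hv; subst hw
    obtain ⟨a, rfl⟩ : ∃ a : Fin n, u = a.castSucc :=
      ⟨u.castPred (fun he => hs.1 he.symm), (castSucc_castPred _ _).symm⟩
    exact ⟨a, k, rfl, rfl, SimpleGraph.Walk.cons ((adj_castSucc F R).mp h) q', rfl⟩

lemma reachable_of_preimage {i j : Fin n} (p : (G').Walk i.castSucc j.castSucc)
    (hs : Fin.last n ∉ p.support) : (G).Reachable i j := by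
  obtain ⟨i', j', hx, hy, q, _⟩ := exists_preimage F R p hs
  rw [castSucc_inj] at hx hy
  subst hx; subst hy
  exact ⟨q⟩

lemma aug_acyclic_iff :
    (G').IsAcyclic ↔ (G).IsAcyclic ∧
      Set.InjOn ((G).connectedComponentMk) ↑R := by
  constructor
  · intro H
    constructor
    · intro v c hc
      exact H (c.map (homF F R))
        ((SimpleGraph.Walk.map_isCycle_iff_of_injective (homF_injective F R)).mpr hc)
    · intro r₁ hr₁ r₂ hr₂ heq
      by_contra hne
      obtain ⟨w⟩ := SimpleGraph.ConnectedComponent.exact heq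
      have hpath : (w.toPath.val).IsPath := w.toPath.2
      set mp := (w.toPath.val).map (homF F R) with hmpdef
      have hmp : mp.IsPath :=
        SimpleGraph.Walk.map_isPath_of_injective (homF_injective F R) hpath
      have hlast : Fin.last n ∉ mp.support := by
        rw [hmpdef, SimpleGraph.Walk.support_map]
        rintro hmem
        obtain ⟨a, _, ha⟩ := List.mem_map.mp hmem
        exact (castSucc_lt_last a).ne ha
      have h₁ : (G').Adj (Fin.last n) (homF F R r₁) :=
        ((adj_last F R).mpr ⟨r₁, hr₁, rfl⟩).symm
      have h₂ : (G').Adj (homF F R r₂) (Fin.last n) :=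
        (adj_last F R).mpr ⟨r₂, hr₂, rfl⟩
      have hcyc : (SimpleGraph.Walk.cons h₁ (mp.concat h₂)).IsCycle := by
        rw [SimpleGraph.Walk.cons_isCycle_iff]
        constructor
        · rw [← SimpleGraph.Walk.isPath_reverse_iff, SimpleGraph.Walk.reverse_concat]
          rw [SimpleGraph.Walk.cons_isPath_iff]
          refine ⟨(SimpleGraph.Walk.isPath_reverse_iff mp).mpr hmp, ?_⟩
          rw [SimpleGraph.Walk.support_reverse, List.mem_reverse]
          exact hlast
        · rw [SimpleGraph.Walk.edges_concat, List.concat_eq_append, List.mem_append]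
          rintro (hmem | hmem)
          · exact hlast (SimpleGraph.Walk.fst_mem_support_of_mem_edges mp hmem)
          · simp only [List.mem_singleton, Sym2.eq, Sym2.rel_iff', Prod.mk.injEq,
              Prod.swap_prod_mk] at hmem
            rcases hmem with ⟨h1, h2⟩ | ⟨h1, h2⟩
            · exact (castSucc_lt_last r₂).ne h1.symm
            · have h2' : r₁.castSucc = r₂.castSucc := h2
              exact hne (castSucc_inj.mp h2')
      exact H _ hcyc
  · rintro ⟨hG, hinj⟩ v c hc
    by_cases hlast : Fin.last n ∈ c.support
    · set c' := c.rotate _ hlast with hc'def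
      have hc' : c'.IsCycle := hc.rotate hlast
      clear_value c'
      clear hc'def hc hlast c
      cases c' with
      | nil => exact hc'.ne_nil rfl
      | @cons u b w h q =>
        have hb : b ≠ Fin.last n := h.ne'
        obtain ⟨b₂, h₂, q₂, hqrev⟩ :=
          SimpleGraph.Walk.exists_eq_cons_of_ne (Ne.symm hb) q.reverse
        have hq : q = q₂.reverse.concat h₂.symm := by
          rw [← SimpleGraph.Walk.reverse_reverse q, hqrev,
            SimpleGraph.Walk.reverse_cons, SimpleGraph.Walk.concat_eq_append]
        subst hq
        obtain ⟨r₁, hr₁, hb1⟩ := (adj_last F R).mp h.symm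
        obtain ⟨r₂, hr₂, hb2⟩ := (adj_last F R).mp h₂.symm
        rw [SimpleGraph.Walk.cons_isCycle_iff] at hc'
        obtain ⟨hpath, hedge⟩ := hc'
        have hlastm : Fin.last n ∉ q₂.reverse.support := by
          intro hmem
          have hnd := hpath.support_nodup
          rw [SimpleGraph.Walk.support_concat] at hnd
          exact (List.disjoint_of_nodup_append hnd) hmem (List.mem_singleton_self _)
        have hreach : (G).Reachable r₁ r₂ :=
          reachable_of_preimage F R (q₂.reverse.copy hb1 hb2)
            (by rwa [SimpleGraph.Walk.support_copy])
        have hr : r₁ = r₂ := hinj hr₁ hr₂ (SimpleGraph.ConnectedComponent.sound hreach)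
        subst hr
        apply hedge
        rw [SimpleGraph.Walk.edges_concat, List.concat_eq_append, List.mem_append]
        right
        have hbb : b = b₂ := by rw [hb1, hb2]
        rw [hbb]
        simp [Sym2.eq_swap]
    · obtain ⟨i, j, hx, hy, q, hq⟩ := exists_preimage F R c hlast
      subst hx
      have hij : i = j := castSucc_inj.mp hy
      subst hij
      have hcq : c = q.map (homF F R) := hq
      rw [hcq] at hc
      exact hG q ((SimpleGraph.Walk.map_isCycle_iff_of_injective (homF_injective F R)).mp hc)

end Graph

end part2

section part3
open Finset SimpleGraph Fin

variable {n : ℕ}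

lemma treeFactor_eq (F : Finset (Fin n × Fin n)) (g : Fin n → ℝ) :
    treeFactor F g = ∑ R : Finset (Fin n),
      if Set.InjOn ((SimpleGraph.fromRel
          (fun i j => (i, j) ∈ F)).connectedComponentMk) ↑R
      then ∏ i ∈ R, g i else 0 := by
  unfold treeFactor
  rw [prod_fiber_eq_sum]
  have hfilt : (univ.filter (fun i : Fin n =>
      (SimpleGraph.fromRel (fun i j => (i, j) ∈ F)).connectedComponentMk i
        ∈ univ.image ((SimpleGraph.fromRel
          (fun i j => (i, j) ∈ F)).connectedComponentMk))) = univ := by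
    ext i
    simp only [Finset.mem_filter, Finset.mem_univ, true_and, iff_true, Finset.mem_image]
    exact ⟨i, rfl⟩
  rw [hfilt, Finset.powerset_univ]

lemma forestRep_augSet_iff (F : Finset (Fin n × Fin n)) (R : Finset (Fin n)) :
    ForestRep (augSet F R) ↔ ForestRep F ∧
      Set.InjOn ((SimpleGraph.fromRel
        (fun i j => (i, j) ∈ F)).connectedComponentMk) ↑R := by
  unfold ForestRep
  rw [aug_acyclic_iff]
  constructor
  · rintro ⟨hord, hac, hinj⟩
    refine ⟨⟨fun p hp => ?_, hac⟩, hinj⟩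
    have := hord (p.1.castSucc, p.2.castSucc)
      ((mem_augSet_castSucc F R).mpr (by simpa using hp))
    simpa using this
  · rintro ⟨⟨hord, hac⟩, hinj⟩
    refine ⟨fun p hp => ?_, hac, hinj⟩
    rcases Finset.mem_union.mp hp with hp | hp
    · obtain ⟨q, hq, rfl⟩ := Finset.mem_image.mp hp
      simpa using hord q hq
    · obtain ⟨r, hr, rfl⟩ := Finset.mem_image.mp hp
      exact castSucc_lt_last r

lemma fwt_augSet (β : Fin n → Fin n → ℝ) (h : Fin n → ℝ)
    (F : Finset (Fin n × Fin n)) (R : Finset (Fin n)) :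
    fwt (βaug β h) (augSet F R) = fwt β F * ∏ r ∈ R, h r := by
  unfold fwt augSet
  have hdisj : Disjoint (F.image (fun p : Fin n × Fin n => (p.1.castSucc, p.2.castSucc)))
      (R.image (fun r : Fin n => (r.castSucc, Fin.last n))) := by
    rw [Finset.disjoint_left]
    intro x hx hx2
    obtain ⟨p, _, rfl⟩ := Finset.mem_image.mp hx
    obtain ⟨r, _, hre⟩ := Finset.mem_image.mp hx2
    exact (castSucc_lt_last p.2).ne' (congrArg Prod.snd hre)
  rw [Finset.prod_union hdisj]
  congr 1
  · rw [Finset.prod_image (fun p _ q _ hpq => ?_)]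
    · refine Finset.prod_congr rfl fun p _ => ?_
      simp only [βaug, dif_neg (castSucc_lt_last p.1).ne, dif_neg (castSucc_lt_last p.2).ne,
        castPred_castSucc]
    · rw [Prod.ext_iff] at hpq
      exact Prod.ext (castSucc_inj.mp hpq.1) (castSucc_inj.mp hpq.2)
  · rw [Finset.prod_image (fun r _ s _ hrs => castSucc_inj.mp (congrArg Prod.fst hrs))]
    refine Finset.prod_congr rfl fun r _ => ?_
    simp [βaug, (castSucc_lt_last r).ne, castPred_castSucc]

end part3

theorem augmented_graph_forest_identity (n : ℕ)
    (β : Fin n → Fin n → ℝ) (hβ : ∀ i j, β i j = β j i) (hβnn : ∀ i j, 0 ≤ β i j)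
    (h : Fin n → ℝ) (hh : ∀ i, 0 ≤ h i) :
    (∑ F : Finset (Fin n × Fin n),
        if ForestRep F then fwt β F * treeFactor F h else 0)
    = ∑ F' : Finset (Fin (n + 1) × Fin (n + 1)),
        if ForestRep F' then fwt (βaug β h) F' else 0 := by
  classical
  open Finset SimpleGraph Fin in
  have lhs_eq : ∀ F : Finset (Fin n × Fin n),
      (if ForestRep F then fwt β F * treeFactor F h else 0)
      = ∑ R : Finset (Fin n),
          (if (ForestRep F ∧ Set.InjOn ((SimpleGraph.fromRel
              (fun i j => (i, j) ∈ F)).connectedComponentMk) ↑R)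
          then fwt β F * ∏ i ∈ R, h i else 0) := by
    intro F
    by_cases hF : ForestRep F
    · rw [if_pos hF, treeFactor_eq, Finset.mul_sum]
      refine Finset.sum_congr rfl fun R _ => ?_
      by_cases hR : Set.InjOn ((SimpleGraph.fromRel
          (fun i j => (i, j) ∈ F)).connectedComponentMk) ↑R
      · rw [if_pos hR, if_pos ⟨hF, hR⟩]
      · rw [if_neg hR, if_neg (fun hc => hR hc.2), mul_zero]
    · rw [if_neg hF]
      exact (Finset.sum_eq_zero fun R _ => if_neg (fun hc => hF hc.1)).symm
  rw [Finset.sum_congr rfl (fun F _ => lhs_eq F)]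
  have hprod : (∑ F : Finset (Fin n × Fin n), ∑ R : Finset (Fin n),
        (if (ForestRep F ∧ Set.InjOn ((SimpleGraph.fromRel
            (fun i j => (i, j) ∈ F)).connectedComponentMk) ↑R)
        then fwt β F * ∏ i ∈ R, h i else 0))
      = ∑ p ∈ (Finset.univ ×ˢ Finset.univ :
            Finset (Finset (Fin n × Fin n) × Finset (Fin n))),
        (if (ForestRep p.1 ∧ Set.InjOn ((SimpleGraph.fromRel
            (fun i j => (i, j) ∈ p.1)).connectedComponentMk) ↑p.2)
        then fwt β p.1 * ∏ i ∈ p.2, h i else 0) :=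
    (Finset.sum_product' _ _ _).symm
  rw [hprod]
  have rhs_filter :
      (∑ F' : Finset (Fin (n + 1) × Fin (n + 1)),
        if ForestRep F' then fwt (βaug β h) F' else 0)
      = ∑ F' ∈ Finset.univ.filter
          (fun F' : Finset (Fin (n+1) × Fin (n+1)) => ∀ p ∈ F', p.1 ≠ Fin.last n),
          (if ForestRep F' then fwt (βaug β h) F' else 0) := by
    symm
    apply Finset.sum_filter_of_ne
    intro F' _ hne p hp hplast
    by_cases hF' : ForestRep F'
    · have := hF'.1 p hp
      rw [hplast] at this
      exact absurd this (not_lt.mpr (Fin.le_last _))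
    · rw [if_neg hF'] at hne
      exact hne rfl
  rw [rhs_filter]
  refine Finset.sum_bij'
    (fun (pr : Finset (Fin n × Fin n) × Finset (Fin n)) _ => augSet pr.1 pr.2)
    (fun F' _ => (Finset.univ.filter
        (fun q : Fin n × Fin n => (q.1.castSucc, q.2.castSucc) ∈ F'),
      Finset.univ.filter (fun r : Fin n => (r.castSucc, Fin.last n) ∈ F')))
    ?_ ?_ ?_ ?_ ?_
  · -- maps into filter
    intro pr _
    rw [Finset.mem_filter]
    refine ⟨Finset.mem_univ _, fun p hp => ?_⟩
    rcases Finset.mem_union.mp hp with hp | hp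
    · obtain ⟨q, _, rfl⟩ := Finset.mem_image.mp hp
      exact (Fin.castSucc_lt_last q.1).ne
    · obtain ⟨r, _, rfl⟩ := Finset.mem_image.mp hp
      exact (Fin.castSucc_lt_last r).ne
  · intro F' _
    simp [Finset.mem_product]
  · -- left inverse
    intro pr _
    refine Prod.ext ?_ ?_
    · ext q
      simp only [Finset.mem_filter, Finset.mem_univ, true_and]
      exact (mem_augSet_castSucc pr.1 pr.2).trans (by simp)
    · ext r
      simp only [Finset.mem_filter, Finset.mem_univ, true_and]
      rw [mem_augSet_last]
      constructor
      · rintro ⟨r', hr', he⟩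
        rwa [Fin.castSucc_inj.mp he]
      · intro hr
        exact ⟨r, hr, rfl⟩
  · -- right inverse
    intro F' hF'
    rw [Finset.mem_filter] at hF'
    have hgood := hF'.2
    ext p
    constructor
    · intro hp
      rcases Finset.mem_union.mp hp with hp | hp
      · obtain ⟨q, hq, rfl⟩ := Finset.mem_image.mp hp
        exact (Finset.mem_filter.mp hq).2
      · obtain ⟨r, hr, rfl⟩ := Finset.mem_image.mp hp
        exact (Finset.mem_filter.mp hr).2
    · intro hp
      have h1 : p.1 ≠ Fin.last n := hgood p hp
      by_cases h2 : p.2 = Fin.last n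
      · apply Finset.mem_union_right
        apply Finset.mem_image.mpr
        refine ⟨p.1.castPred h1, Finset.mem_filter.mpr ⟨Finset.mem_univ _, ?_⟩, ?_⟩
        · rw [Fin.castSucc_castPred]
          have : ((p.1, Fin.last n) : Fin (n+1) × Fin (n+1)) = p :=
            Prod.ext rfl h2.symm
          rwa [this]
        · rw [Fin.castSucc_castPred]
          exact Prod.ext rfl h2.symm
      · apply Finset.mem_union_left
        apply Finset.mem_image.mpr
        refine ⟨(p.1.castPred h1, p.2.castPred h2),
          Finset.mem_filter.mpr ⟨Finset.mem_univ _, ?_⟩, ?_⟩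
        · simp only [Fin.castSucc_castPred]
          exact hp
        · simp only [Fin.castSucc_castPred]
  · -- values
    intro pr _
    by_cases hc : ForestRep pr.1 ∧ Set.InjOn ((SimpleGraph.fromRel
        (fun i j => (i, j) ∈ pr.1)).connectedComponentMk) ↑pr.2
    · rw [if_pos hc, if_pos ((forestRep_augSet_iff pr.1 pr.2).mpr hc), fwt_augSet]
    · rw [if_neg hc, if_neg (fun hc' => hc ((forestRep_augSet_iff pr.1 pr.2).mp hc'))]
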